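/- arXiv:1305.1654 — 11 statements merged into one kernel-verified Lean document; each statement's English description precedes it below -/
import Mathlib

section
/- Let G be an abelian group, α an automorphism with α² = id, w ∈ G, β(u) = α(u) + w, and suppose (α+id)(w) has finite order q₀. If β^(2q+1) has a fixed point for some q ≥ 0, then (2q+1)·(α(w)+w) = 0, hence q₀ divides 2q+1; in particular q₀ is odd. -/
/-- If `(α + id)(w)` has finite order `q₀` and `β^[2q+1]` has a fixed point, then
`(2q+1) • (α w + w) = 0`, so `q₀ ∣ 2q+1`; in particular `q₀` is odd. -/
theorem stmt_4 {G : Type*} [AddCommGroup G] (α : G ≃+ G) (hα : ∀ g, α (α g) = g)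
    (w : G) (β : G → G) (hβ : ∀ u, β u = α u + w)
    (hfin : IsOfFinAddOrder (α w + w)) (q : ℕ)
    (hfix : ∃ u : G, β^[2 * q + 1] u = u) :
    (2 * q + 1) • (α w + w) = 0 ∧ addOrderOf (α w + w) ∣ (2 * q + 1) ∧
      Odd (addOrderOf (α w + w)) := by
  obtain ⟨u, hu⟩ := hfix
  have hc : α (α w + w) = α w + w := by rw [map_add, hα]; abel
  have h2 : ∀ v : G, β^[2] v = v + (α w + w) := by
    intro v
    show β (β v) = _
    rw [hβ, hβ, map_add, hα]
    abel
  have key : ∀ n : ℕ, ∀ v : G, β^[2 * n + 1] v = α v + w + n • (α w + w) := by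
    intro n
    induction n with
    | zero => intro v; simp [hβ]
    | succ k ih =>
      intro v
      have hn : 2 * (k + 1) + 1 = (2 * k + 1) + 2 := by ring
      rw [hn, Function.iterate_add_apply, h2, ih, map_add, hc, succ_nsmul]
      abel
  rw [key] at hu
  -- apply α to hu
  have hu2 : u + α w + q • (α w + w) = α u := by
    have := congrArg α hu
    rw [map_add, map_add, hα, map_nsmul, hc] at this
    linear_combination (norm := abel) this
  have h0 : (2 * q + 1) • (α w + w) = 0 := by
    have : (u + α w + q • (α w + w)) + w + q • (α w + w) = u := by rw [hu2]; exact hu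
    have h2q : (2 * q + 1) • (α w + w) = q • (α w + w) + q • (α w + w) + (α w + w) := by
      rw [show 2 * q + 1 = q + q + 1 by ring, add_nsmul, add_nsmul, one_nsmul]
    rw [h2q]
    linear_combination (norm := abel) this
  refine ⟨h0, ?_, ?_⟩
  · exact (addOrderOf_dvd_iff_nsmul_eq_zero).2 h0
  · have hd := (addOrderOf_dvd_iff_nsmul_eq_zero).2 h0
    have hodd : Odd (2 * q + 1) := ⟨q, by ring⟩
    exact hodd.of_dvd_nat hd
end

section
/- Let G be an abelian group, α an automorphism with α² = id, w ∈ G, β(u) = α(u) + w, q₀ the (finite) order of (α+id)(w). If q₀ = 2q+1 is odd and (q·(α+id) + id)(w) ∈ (α - id)(G), then β^(q₀) has a fixed point; i.e., an odd order orbit of β exists. -/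
/-- If the order `q₀` of `(α + id)(w)` is odd, `q₀ = 2q+1`, and
`(q(α+id) + id)(w) = q • (α w + w) + w` lies in `(α - id)(G)`, then `β^[q₀]` has a
fixed point, i.e. an odd order orbit of `β` exists. -/
theorem stmt_5 {G : Type*} [AddCommGroup G] (α : G ≃+ G) (hα : ∀ g, α (α g) = g)
    (w : G) (β : G → G) (hβ : ∀ u, β u = α u + w) (q : ℕ)
    (hq : addOrderOf (α w + w) = 2 * q + 1)
    (hmem : ∃ g : G, α g - g = q • (α w + w) + w) :
    ∃ u : G, β^[addOrderOf (α w + w)] u = u := by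
  obtain ⟨g, hg⟩ := hmem
  have key : ∀ k u, β^[2 * k] u = u + k • (α w + w) := by
    intro k
    induction k with
    | zero => intro u; simp
    | succ k ih =>
      intro u
      have h2 : 2 * (k + 1) = 2 * k + 2 := by ring
      rw [h2, Function.iterate_add_apply]
      have : β^[2] u = u + (α w + w) := by
        simp [Function.iterate_succ_apply, hβ, map_add, hα]
        abel
      rw [this, ih]
      rw [succ_nsmul]
      abel
  refine ⟨-g, ?_⟩
  rw [hq, Function.iterate_add_apply, Function.iterate_one, key, hβ]
  have : α (-g) = -g - (q • (α w + w) + w) := by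
    rw [map_neg]
    have : α g = g + (q • (α w + w) + w) := by
      rw [← hg]; abel
    rw [this]; abel
  rw [this]; abel
end

section
/- Let G be an abelian group, α an automorphism with α² = id and (α - id)(G) = ker(α + id), w ∈ G with (α+id)(w) of finite odd order q₀ = 2q+1. Then β(u) = α(u) + w has a fixed point of β^(q₀), i.e., odd order orbits exist. -/
/-- If `(α - id)(G) = ker (α + id)` and the order `q₀` of `(α + id)(w)` is finite and
odd, then `β^[q₀]` has a fixed point, i.e. odd order orbits exist. -/
theorem stmt_7 {G : Type*} [AddCommGroup G] (α : G ≃+ G) (hα : ∀ g, α (α g) = g)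
    (hker : ∀ x : G, (∃ g : G, α g - g = x) ↔ α x + x = 0)
    (w : G) (β : G → G) (hβ : ∀ u, β u = α u + w)
    (hfin : IsOfFinAddOrder (α w + w)) (hodd : Odd (addOrderOf (α w + w))) :
    ∃ u : G, β^[addOrderOf (α w + w)] u = u := by
  set s : G := α w + w with hs
  have hαs : α s = s := by
    simp [hs, map_add, hα w, add_comm]
  have hβ2 : ∀ u, β (β u) = u + s := by
    intro u
    simp [hβ, map_add, hα u, hs]
    abel
  have hiter : ∀ k : ℕ, ∀ u : G, β^[2 * k + 1] u = α u + w + k • s := by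
    intro k
    induction k with
    | zero => intro u; simp [hβ]
    | succ k ih =>
      intro u
      have h1 : 2 * (k + 1) + 1 = (2 * k + 1) + 2 := by ring
      rw [h1, Function.iterate_add_apply]
      have : β^[2] u = u + s := by simp [Function.iterate_succ_apply, hβ2]
      rw [this, ih, map_add, hαs, succ_nsmul]
      abel
  obtain ⟨q, hq⟩ := hodd
  have hx : α (-(w + q • s)) + -(w + q • s) = 0 := by
    have horder : addOrderOf s • s = 0 := addOrderOf_nsmul_eq_zero s
    rw [hq] at horder
    have : α (-(w + q • s)) = -(α w + q • s) := by
      rw [map_neg, map_add, map_nsmul, hαs]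
    rw [this]
    have : (2 * q + 1) • s = s + q • s + q • s := by
      rw [show 2 * q + 1 = q + q + 1 by ring, add_nsmul, add_nsmul, one_nsmul]
      abel
    rw [this] at horder
    have : α w + q • s + (w + q • s) = s + q • s + q • s := by rw [hs]; abel
    rw [← neg_add, this, horder, neg_zero]
  obtain ⟨g, hg⟩ := (hker _).mpr hx
  refine ⟨g, ?_⟩
  rw [hq, hiter q g]
  have : α g = g - (w + q • s) := by
    have := hg
    rw [sub_eq_iff_eq_add] at this
    rw [this]; abel
  rw [this]; abel
end

section
/- Let G be an abelian group, α an automorphism with α² = id, w ∈ G, β(u) = α(u) + w, q₀ the finite order of (α+id)(w), with q₀ = 2q+1 odd. Then the set of fixed points of β^(q₀) equals the preimage (α - id)^{-1}{ -(q·(α+id)(w) + w) }, and if nonempty it has the same cardinality as ker(α - id). -/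
/-- If the order `q₀ = 2q+1` of `(α + id)(w)` is finite and odd, then the fixed point
set of `β^[q₀]` is the preimage `(α - id)⁻¹{-(q • (α w + w) + w)}`, and if it is
nonempty it has the same cardinality as `ker (α - id)`. -/
theorem stmt_8 {G : Type*} [AddCommGroup G] (α : G ≃+ G) (hα : ∀ g, α (α g) = g)
    (w : G) (β : G → G) (hβ : ∀ u, β u = α u + w) (q : ℕ)
    (hq : addOrderOf (α w + w) = 2 * q + 1) :
    (∀ u : G, β^[2 * q + 1] u = u ↔ α u - u = -(q • (α w + w) + w)) ∧
      ((∃ u : G, β^[2 * q + 1] u = u) →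
        Nonempty ({u : G // β^[2 * q + 1] u = u} ≃ {g : G // α g = g})) := by
  set c : G := α w + w with hc
  have hαc : α c = c := by
    rw [hc, map_add, hα, add_comm]
  have key2 : ∀ (k : ℕ) (u : G), β^[2 * k] u = u + k • c := by
    intro k
    induction k with
    | zero => simp
    | succ n ih =>
      intro u
      have h2 : 2 * (n + 1) = 2 * n + 2 := by ring
      rw [h2, Function.iterate_add_apply]
      have : β^[2] u = u + c := by
        simp only [Function.iterate_succ, Function.iterate_zero, Function.comp_apply, id_eq,
          hβ, map_add, hα]
        rw [hc]; abel
      rw [this, ih, succ_nsmul]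
      abel
  have key : ∀ u : G, β^[2 * q + 1] u = α u + q • c + w := by
    intro u
    rw [show 2 * q + 1 = 1 + 2 * q by ring, Function.iterate_add_apply, key2,
      Function.iterate_one, hβ, map_add]
    have : α (q • c) = q • c := by rw [map_nsmul, hαc]
    rw [this]
  have main : ∀ u : G, β^[2 * q + 1] u = u ↔ α u - u = -(q • c + w) := by
    intro u
    rw [key]
    constructor
    · intro h
      have h' : α u + (q • c + w) = u := by rw [← add_assoc]; exact h
      rw [eq_sub_of_add_eq h']
      abel
    · intro h
      have h' : α u = -(q • c + w) + u := by rw [← h]; abel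
      rw [h']
      abel
  refine ⟨main, ?_⟩
  rintro ⟨u₀, hu₀⟩
  have hu₀' : α u₀ - u₀ = -(q • c + w) := (main u₀).mp hu₀
  refine ⟨{
    toFun := fun u => ⟨u.1 - u₀, ?_⟩
    invFun := fun g => ⟨u₀ + g.1, ?_⟩
    left_inv := ?_
    right_inv := ?_ }⟩
  · have h := (main u.1).mp u.2
    have : α (u.1 - u₀) - (u.1 - u₀) = (α u.1 - u.1) - (α u₀ - u₀) := by
      rw [map_sub]; abel
    have h0 : α (u.1 - u₀) - (u.1 - u₀) = 0 := by rw [this, h, hu₀']; abel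
    have := sub_eq_zero.mp h0
    exact this
  · rw [main]
    have hg := g.2
    rw [map_add, hg]
    rw [show α u₀ + g.1 - (u₀ + g.1) = α u₀ - u₀ by abel, hu₀']
  · intro u; ext; simp
  · intro g; ext; simp
end

section
/- For integers a, b with |a| ≠ |b|, let G = Z²/(Z·(a,b) + Z·(b,a)). There is an exact sequence 0 → Z/|a+b| → G → Z/|a-b| → 0, where the first map sends [z] to [z,z] and the second sends [u₁,u₂] to [u₁ - u₂]. -/
/-- For integers `a, b` with `|a| ≠ |b|` and `G = ℤ²/(ℤ(a,b) + ℤ(b,a))`, there is a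
short exact sequence `0 → ℤ/|a+b| → G → ℤ/|a-b| → 0`, where the first map sends
`[z]` to `[(z,z)]` and the second sends `[(u₁,u₂)]` to `[u₁ - u₂]`. -/
theorem stmt_10 (a b : ℤ) (h : a ^ 2 ≠ b ^ 2) :
    ∃ (Δ : ZMod (a + b).natAbs →+ (ℤ × ℤ) ⧸ AddSubgroup.closure {((a, b) : ℤ × ℤ), (b, a)})
      (r : ((ℤ × ℤ) ⧸ AddSubgroup.closure {((a, b) : ℤ × ℤ), (b, a)}) →+ ZMod (a - b).natAbs),
      (∀ z : ℤ, Δ (z : ZMod (a + b).natAbs) = QuotientAddGroup.mk (z, z)) ∧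
      (∀ u : ℤ × ℤ, r (QuotientAddGroup.mk u) = ((u.1 - u.2 : ℤ) : ZMod (a - b).natAbs)) ∧
      Function.Injective Δ ∧ Function.Surjective r ∧ Δ.range = r.ker := by
  set H : AddSubgroup (ℤ × ℤ) := AddSubgroup.closure {((a, b) : ℤ × ℤ), (b, a)} with hH
  have hab : a - b ≠ 0 := by
    intro h0
    exact h (by rw [sub_eq_zero.mp h0])
  -- diagonal hom ℤ → G
  have habH : ((a + b, a + b) : ℤ × ℤ) ∈ H := by
    have : ((a + b, a + b) : ℤ × ℤ) = (a, b) + (b, a) := by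
      simp [Prod.ext_iff, add_comm]
    rw [this]
    exact add_mem (AddSubgroup.subset_closure (by simp))
      (AddSubgroup.subset_closure (by simp))
  let δ : ℤ →+ (ℤ × ℤ) ⧸ H :=
    (QuotientAddGroup.mk' H).comp ((AddMonoidHom.id ℤ).prod (AddMonoidHom.id ℤ))
  have hδ : ∀ z : ℤ, δ z = QuotientAddGroup.mk (z, z) := fun z => rfl
  have hδ0 : δ ((a + b).natAbs : ℤ) = 0 := by
    have key : δ (a + b) = 0 := by
      rw [hδ]
      exact (QuotientAddGroup.eq_zero_iff _).mpr habH
    rcases Int.natAbs_eq (a + b) with he | he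
    · rw [he] at key; exact key
    · have : ((a + b).natAbs : ℤ) = -(a + b) := by omega
      rw [this, map_neg, key, neg_zero]
  let Δ : ZMod (a + b).natAbs →+ (ℤ × ℤ) ⧸ H := ZMod.lift _ ⟨δ, hδ0⟩
  have hΔ : ∀ z : ℤ, Δ (z : ZMod (a + b).natAbs) = QuotientAddGroup.mk (z, z) := by
    intro z
    rw [show Δ (z : ZMod (a + b).natAbs) = δ z from ZMod.lift_coe _ _ z, hδ]
  -- r
  let φ : ℤ × ℤ →+ ZMod (a - b).natAbs :=
    (Int.castAddHom (ZMod (a - b).natAbs)).comp (AddMonoidHom.fst ℤ ℤ - AddMonoidHom.snd ℤ ℤ)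
  have hφ : ∀ u : ℤ × ℤ, φ u = ((u.1 - u.2 : ℤ) : ZMod (a - b).natAbs) := fun u => rfl
  have hφH : ∀ x ∈ H, φ x = 0 := by
    intro x hx
    refine AddSubgroup.closure_induction ?_ (map_zero φ) ?_ ?_ hx
    · rintro y (rfl | rfl)
      · rw [hφ]
        simpa using (ZMod.intCast_zmod_eq_zero_iff_dvd (a - b) (a - b).natAbs).mpr
          (Int.natAbs_dvd.mpr dvd_rfl)
      · rw [hφ]
        have : ((a - b).natAbs : ℤ) ∣ (b - a) := Int.natAbs_dvd.mpr ⟨-1, by ring⟩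
        simpa using (ZMod.intCast_zmod_eq_zero_iff_dvd (b - a) (a - b).natAbs).mpr this
    · intro x y _ _ hx hy; rw [map_add, hx, hy, add_zero]
    · intro x _ hx; rw [map_neg, hx, neg_zero]
  let r : ((ℤ × ℤ) ⧸ H) →+ ZMod (a - b).natAbs := QuotientAddGroup.lift H φ hφH
  have hr : ∀ u : ℤ × ℤ, r (QuotientAddGroup.mk u) = ((u.1 - u.2 : ℤ) : ZMod (a - b).natAbs) :=
    fun u => hφ u
  refine ⟨Δ, r, hΔ, hr, ?_, ?_, ?_⟩
  · -- injective
    rw [injective_iff_map_eq_zero]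
    intro x hx
    obtain ⟨z, rfl⟩ := ZMod.intCast_surjective x
    rw [hΔ] at hx
    have hmem : ((z, z) : ℤ × ℤ) ∈ H := (QuotientAddGroup.eq_zero_iff _).mp hx
    rw [hH, AddSubgroup.mem_closure_pair] at hmem
    obtain ⟨m, n, hmn⟩ := hmem
    have h1 : m * a + n * b = z := by
      have := congrArg Prod.fst hmn; simpa [Prod.smul_def, smul_eq_mul] using this
    have h2 : m * b + n * a = z := by
      have := congrArg Prod.snd hmn; simpa [Prod.smul_def, smul_eq_mul] using this
    have hmn' : m = n := by
      have : (m - n) * (a - b) = 0 := by linarith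
      rcases mul_eq_zero.mp this with h' | h'
      · omega
      · exact absurd h' hab
    have hz : (a + b) ∣ z := ⟨m, by subst hmn'; linarith⟩
    exact (ZMod.intCast_zmod_eq_zero_iff_dvd z (a + b).natAbs).mpr (Int.natAbs_dvd.mpr hz)
  · -- surjective
    intro c
    obtain ⟨z, rfl⟩ := ZMod.intCast_surjective c
    exact ⟨QuotientAddGroup.mk (z, 0), by rw [hr]; simp⟩
  · -- range = ker
    ext x
    constructor
    · rintro ⟨y, rfl⟩
      obtain ⟨z, rfl⟩ := ZMod.intCast_surjective y
      rw [AddMonoidHom.mem_ker, hΔ, hr]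
      simp
    · intro hx
      induction x using QuotientAddGroup.induction_on with
      | H u =>
        rw [AddMonoidHom.mem_ker, hr] at hx
        have hdvd : (a - b) ∣ (u.1 - u.2) :=
          Int.natAbs_dvd.mp ((ZMod.intCast_zmod_eq_zero_iff_dvd _ _).mp hx)
        obtain ⟨k, hk⟩ := hdvd
        refine ⟨((u.1 - a * k : ℤ) : ZMod (a + b).natAbs), ?_⟩
        rw [hΔ]
        rw [QuotientAddGroup.eq]
        have : -((u.1 - a * k, u.1 - a * k) : ℤ × ℤ) + u = k • ((a, b) : ℤ × ℤ) := by
          ext <;> simp [Prod.smul_def, smul_eq_mul] <;> linarith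
        rw [this]
        exact zsmul_mem (AddSubgroup.subset_closure (by simp)) k
end

section
/- For integers a, b with |a| ≠ |b|, let G = Z²/(Z(a,b)+Z(b,a)) and let α : G → G be the switch involution α([u₁,u₂]) = [u₂,u₁]. Then the image of α + id equals the image of the diagonal map Δ : Z/|a+b| → G, Δ([z]) = [z,z]; in particular (α+id)(G) is cyclic of order |a+b|. -/
/-- For integers `a, b` with `|a| ≠ |b|`, `G = ℤ²/(ℤ(a,b) + ℤ(b,a))` and `α` the switch
involution `α [u₁,u₂] = [u₂,u₁]`, the image of `α + id` equals the image of the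
injective diagonal map `Δ : ℤ/|a+b| → G`, `Δ [z] = [(z,z)]`; in particular
`(α + id)(G)` has order `|a+b|`. -/
theorem stmt_11 (a b : ℤ) (h : a ^ 2 ≠ b ^ 2)
    (α : ((ℤ × ℤ) ⧸ AddSubgroup.closure {((a, b) : ℤ × ℤ), (b, a)}) ≃+
      ((ℤ × ℤ) ⧸ AddSubgroup.closure {((a, b) : ℤ × ℤ), (b, a)}))
    (hswitch : ∀ u : ℤ × ℤ,
      α (QuotientAddGroup.mk u) = QuotientAddGroup.mk (u.2, u.1)) :
    ∃ Δ : ZMod (a + b).natAbs →+ (ℤ × ℤ) ⧸ AddSubgroup.closure {((a, b) : ℤ × ℤ), (b, a)},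
      (∀ z : ℤ, Δ (z : ZMod (a + b).natAbs) = QuotientAddGroup.mk (z, z)) ∧
      Function.Injective Δ ∧
      Set.range (fun g => α g + g) = Set.range Δ ∧
      Nat.card (Set.range (fun g => α g + g)) = (a + b).natAbs := by
  have hab : a + b ≠ 0 := by
    intro hc
    apply h
    have : a = -b := by linarith
    rw [this]; ring
  have hab' : a - b ≠ 0 := by
    intro hc
    apply h
    have : a = b := by linarith
    rw [this]
  -- the integer diagonal map
  let f : ℤ →+ (ℤ × ℤ) ⧸ AddSubgroup.closure {((a, b) : ℤ × ℤ), (b, a)} :=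
    (QuotientAddGroup.mk' _).comp
      { toFun := fun z => ((z, z) : ℤ × ℤ),
        map_zero' := rfl,
        map_add' := fun x y => rfl }
  have hf_apply : ∀ z : ℤ, f z = QuotientAddGroup.mk (z, z) := fun z => rfl
  -- membership characterization
  have hmem : ∀ z : ℤ,
      ((z, z) : ℤ × ℤ) ∈ AddSubgroup.closure {((a, b) : ℤ × ℤ), (b, a)} ↔ (a + b) ∣ z := by
    intro z
    rw [AddSubgroup.mem_closure_pair]
    constructor
    · rintro ⟨m, k, hmk⟩
      have h1 : m * a + k * b = z := congrArg Prod.fst hmk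
      have h2 : m * b + k * a = z := congrArg Prod.snd hmk
      have : (m - k) * (a - b) = 0 := by linarith
      have hmk' : m = k := by
        rcases mul_eq_zero.1 this with h' | h'
        · linarith
        · exact absurd h' hab'
      exact ⟨m, by rw [hmk'] at h1 ⊢; linarith⟩
    · rintro ⟨m, rfl⟩
      exact ⟨m, m, by simp [Prod.ext_iff]; constructor <;> ring⟩
  have hfn : f ((a + b).natAbs : ℤ) = 0 := by
    rw [hf_apply, QuotientAddGroup.eq_zero_iff, hmem]
    exact Int.natAbs_dvd.mp dvd_rfl
  have hΔ : ∀ z : ℤ, (ZMod.lift (a + b).natAbs ⟨f, hfn⟩) (z : ZMod (a+b).natAbs)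
      = QuotientAddGroup.mk (z, z) := fun z => by
    rw [ZMod.lift_coe]; exact hf_apply z
  have hinj : Function.Injective (ZMod.lift (a + b).natAbs ⟨f, hfn⟩) := by
    rw [injective_iff_map_eq_zero]
    intro x hx
    obtain ⟨z, rfl⟩ := ZMod.intCast_surjective x
    rw [hΔ, QuotientAddGroup.eq_zero_iff, hmem] at hx
    rw [ZMod.intCast_zmod_eq_zero_iff_dvd]
    exact Int.natAbs_dvd.mpr hx
  have hrange : Set.range (fun g => α g + g)
      = Set.range (ZMod.lift (a + b).natAbs ⟨f, hfn⟩) := by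
    ext g
    simp only [Set.mem_range]
    constructor
    · rintro ⟨x, rfl⟩
      obtain ⟨u, rfl⟩ := QuotientAddGroup.mk_surjective x
      refine ⟨((u.1 + u.2 : ℤ) : ZMod (a+b).natAbs), ?_⟩
      rw [hΔ, hswitch, ← QuotientAddGroup.mk_add]
      congr 1
      ext <;> simp <;> ring
    · rintro ⟨x, rfl⟩
      obtain ⟨z, rfl⟩ := ZMod.intCast_surjective x
      refine ⟨QuotientAddGroup.mk (z, 0), ?_⟩
      rw [hswitch, hΔ, ← QuotientAddGroup.mk_add]
      congr 1
      ext <;> simp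
  refine ⟨ZMod.lift (a + b).natAbs ⟨f, hfn⟩, hΔ, hinj, hrange, ?_⟩
  rw [hrange, Nat.card_range_of_injective hinj, Nat.card_zmod]
end

section
/- For integers a, b with |a| ≠ |b|, let G = Z²/(Z(a,b)+Z(b,a)) and α the switch involution. Then ker(α + id) has cardinality |a - b| and ker(α - id) has cardinality |a + b|. -/
namespace Stmt12Aux

lemma mem_H_iff (a b : ℤ) (v : ℤ × ℤ) :
    v ∈ AddSubgroup.closure {((a, b) : ℤ × ℤ), (b, a)} ↔
      ∃ p q : ℤ, ((p * a + q * b, p * b + q * a) : ℤ × ℤ) = v := by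
  rw [AddSubgroup.mem_closure_pair]
  constructor
  · rintro ⟨p, q, rfl⟩
    exact ⟨p, q, by simp [Prod.ext_iff, smul_eq_mul]⟩
  · rintro ⟨p, q, rfl⟩
    exact ⟨p, q, by simp [Prod.ext_iff, smul_eq_mul]⟩

lemma diag_mem (a b : ℤ) (hd : a - b ≠ 0) (s : ℤ) :
    ((s, s) : ℤ × ℤ) ∈ AddSubgroup.closure {((a, b) : ℤ × ℤ), (b, a)} ↔ (a + b) ∣ s := by
  rw [mem_H_iff]
  constructor
  · rintro ⟨p, q, hpq⟩
    rw [Prod.ext_iff] at hpq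
    obtain ⟨h1, h2⟩ := hpq
    have hpq' : p = q := by
      have h3 : (p - q) * (a - b) = 0 := by linear_combination h1 - h2
      rcases mul_eq_zero.mp h3 with h4 | h4
      · linarith
      · exact absurd h4 hd
    subst hpq'
    exact ⟨p, by linear_combination -h1⟩
  · rintro ⟨k, rfl⟩
    exact ⟨k, k, by simp [Prod.ext_iff]; constructor <;> ring⟩

lemma antidiag_mem (a b : ℤ) (hs : a + b ≠ 0) (d : ℤ) :
    ((d, -d) : ℤ × ℤ) ∈ AddSubgroup.closure {((a, b) : ℤ × ℤ), (b, a)} ↔ (a - b) ∣ d := by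
  rw [mem_H_iff]
  constructor
  · rintro ⟨p, q, hpq⟩
    rw [Prod.ext_iff] at hpq
    obtain ⟨h1, h2⟩ := hpq
    have hpq' : q = -p := by
      have h3 : (p + q) * (a + b) = 0 := by linear_combination h1 + h2
      rcases mul_eq_zero.mp h3 with h4 | h4
      · linarith
      · exact absurd h4 hs
    subst hpq'
    exact ⟨p, by linear_combination -h1⟩
  · rintro ⟨k, rfl⟩
    exact ⟨k, -k, by simp [Prod.ext_iff]; constructor <;> ring⟩

end Stmt12Aux

open Stmt12Aux in
/-- For integers `a, b` with `|a| ≠ |b|`, `G = ℤ²/(ℤ(a,b) + ℤ(b,a))` and `α` the switch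
involution, `ker (α + id)` has cardinality `|a - b|` and `ker (α - id)` has
cardinality `|a + b|`. -/
theorem stmt_12 (a b : ℤ) (h : a ^ 2 ≠ b ^ 2)
    (α : ((ℤ × ℤ) ⧸ AddSubgroup.closure {((a, b) : ℤ × ℤ), (b, a)}) ≃+
      ((ℤ × ℤ) ⧸ AddSubgroup.closure {((a, b) : ℤ × ℤ), (b, a)}))
    (hswitch : ∀ u : ℤ × ℤ,
      α (QuotientAddGroup.mk u) = QuotientAddGroup.mk (u.2, u.1)) :
    Nat.card {g : (ℤ × ℤ) ⧸ AddSubgroup.closure {((a, b) : ℤ × ℤ), (b, a)} | α g + g = 0} =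
        (a - b).natAbs ∧
      Nat.card {g : (ℤ × ℤ) ⧸ AddSubgroup.closure {((a, b) : ℤ × ℤ), (b, a)} | α g = g} =
        (a + b).natAbs := by
  have hd : a - b ≠ 0 := by
    intro h'
    have hab : a = b := by linarith
    exact h (by rw [hab])
  have hs : a + b ≠ 0 := by
    intro h'
    have hab : a = -b := by linarith
    exact h (by rw [hab]; ring)
  have hker₁ : ∀ u : ℤ × ℤ,
      (α (QuotientAddGroup.mk u) + QuotientAddGroup.mk u = 0) ↔ (a + b) ∣ (u.1 + u.2) := by
    intro u
    rw [hswitch, ← QuotientAddGroup.mk_add, QuotientAddGroup.eq_zero_iff]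
    have huu : ((u.2, u.1) + u : ℤ × ℤ) = ((u.1 + u.2, u.1 + u.2) : ℤ × ℤ) := by
      simp [Prod.ext_iff, add_comm]
    rw [huu, diag_mem a b hd]
  have hker₂ : ∀ u : ℤ × ℤ,
      (α (QuotientAddGroup.mk u) = QuotientAddGroup.mk u) ↔ (a - b) ∣ (u.2 - u.1) := by
    intro u
    rw [hswitch, QuotientAddGroup.eq_iff_sub_mem]
    have huu : ((u.2, u.1) - u : ℤ × ℤ) = ((u.2 - u.1, -(u.2 - u.1)) : ℤ × ℤ) := by
      simp [Prod.ext_iff]; try ring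
    rw [huu, antidiag_mem a b hs]
  constructor
  · -- first part
    set n := (a - b).natAbs with hn
    haveI : NeZero n := ⟨Int.natAbs_ne_zero.mpr hd⟩
    set F : ZMod n → {g : (ℤ × ℤ) ⧸ AddSubgroup.closure {((a, b) : ℤ × ℤ), (b, a)} |
        α g + g = 0} := fun t =>
      ⟨QuotientAddGroup.mk ((t.val : ℤ), -(t.val : ℤ)), by
        refine (hker₁ _).mpr ?_
        simp⟩ with hF
    have hbij : Function.Bijective F := by
      constructor
      · intro s t hst
        have h1 : (((s.val : ℤ), -(s.val : ℤ)) - ((t.val : ℤ), -(t.val : ℤ)) : ℤ × ℤ)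
            ∈ AddSubgroup.closure {((a, b) : ℤ × ℤ), (b, a)} :=
          (QuotientAddGroup.eq_iff_sub_mem).mp (Subtype.ext_iff.mp hst)
        have h2 : ((((s.val : ℤ) - t.val), -((s.val : ℤ) - t.val)) : ℤ × ℤ)
            ∈ AddSubgroup.closure {((a, b) : ℤ × ℤ), (b, a)} := by
          convert h1 using 2 <;> simp [Prod.ext_iff] <;> try ring
        rw [antidiag_mem a b hs] at h2
        have h3 : (((s.val : ℤ) - t.val : ℤ) : ZMod n) = 0 := by
          rw [ZMod.intCast_zmod_eq_zero_iff_dvd]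
          exact (Int.natAbs_dvd).mpr h2
        have h4 : ((s.val : ZMod n)) = ((t.val : ZMod n)) := by
          have := sub_eq_zero.mp (by push_cast at h3 ⊢; exact h3)
          exact this
        rwa [ZMod.natCast_rightInverse s, ZMod.natCast_rightInverse t] at h4
      · rintro ⟨g, hg⟩
        obtain ⟨u, rfl⟩ := QuotientAddGroup.mk_surjective g
        rw [Set.mem_setOf_eq, hker₁] at hg
        obtain ⟨k, hk⟩ := hg
        refine ⟨((u.1 - b * k : ℤ) : ZMod n), Subtype.ext ?_⟩
        set v : ℤ := (((u.1 - b * k : ℤ) : ZMod n).val : ℤ) with hv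
        have hvv : (a - b) ∣ (u.1 - b * k - v) := by
          have h5 : ((u.1 - b * k - v : ℤ) : ZMod n) = 0 := by
            push_cast [hv]
            rw [ZMod.natCast_rightInverse]
            ring
          exact (Int.natAbs_dvd).mp ((ZMod.intCast_zmod_eq_zero_iff_dvd _ _).mp h5)
        obtain ⟨j, hj⟩ := hvv
        show QuotientAddGroup.mk (v, -v) = QuotientAddGroup.mk u
        rw [QuotientAddGroup.eq_iff_sub_mem]
        refine (mem_H_iff a b _).mpr ⟨-j, -(k - j), ?_⟩
        have h6 : ((v, -v) - u : ℤ × ℤ) = ((v - u.1, -v - u.2) : ℤ × ℤ) := by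
          simp [Prod.ext_iff]; try ring
        rw [h6, Prod.ext_iff]
        constructor
        · show -j * a + -(k - j) * b = v - u.1
          linear_combination hj
        · show -j * b + -(k - j) * a = -v - u.2
          linear_combination hk - hj
    calc Nat.card {g : (ℤ × ℤ) ⧸ AddSubgroup.closure {((a, b) : ℤ × ℤ), (b, a)} |
            α g + g = 0} = Nat.card (ZMod n) := (Nat.card_eq_of_bijective F hbij).symm
      _ = n := Nat.card_zmod n
  · -- second part
    set m := (a + b).natAbs with hm
    haveI : NeZero m := ⟨Int.natAbs_ne_zero.mpr hs⟩
    set F : ZMod m → {g : (ℤ × ℤ) ⧸ AddSubgroup.closure {((a, b) : ℤ × ℤ), (b, a)} |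
        α g = g} := fun t =>
      ⟨QuotientAddGroup.mk ((t.val : ℤ), (t.val : ℤ)), by
        refine (hker₂ _).mpr ?_
        simp⟩ with hF
    have hbij : Function.Bijective F := by
      constructor
      · intro s t hst
        have h1 : (((s.val : ℤ), (s.val : ℤ)) - ((t.val : ℤ), (t.val : ℤ)) : ℤ × ℤ)
            ∈ AddSubgroup.closure {((a, b) : ℤ × ℤ), (b, a)} :=
          (QuotientAddGroup.eq_iff_sub_mem).mp (Subtype.ext_iff.mp hst)
        have h2 : ((((s.val : ℤ) - t.val), ((s.val : ℤ) - t.val)) : ℤ × ℤ)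
            ∈ AddSubgroup.closure {((a, b) : ℤ × ℤ), (b, a)} := by
          convert h1 using 2 <;> simp [Prod.ext_iff]
        rw [diag_mem a b hd] at h2
        have h3 : (((s.val : ℤ) - t.val : ℤ) : ZMod m) = 0 := by
          rw [ZMod.intCast_zmod_eq_zero_iff_dvd]
          exact (Int.natAbs_dvd).mpr h2
        have h4 : ((s.val : ZMod m)) = ((t.val : ZMod m)) := by
          have := sub_eq_zero.mp (by push_cast at h3 ⊢; exact h3)
          exact this
        rwa [ZMod.natCast_rightInverse s, ZMod.natCast_rightInverse t] at h4
      · rintro ⟨g, hg⟩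
        obtain ⟨u, rfl⟩ := QuotientAddGroup.mk_surjective g
        rw [Set.mem_setOf_eq, hker₂] at hg
        obtain ⟨k, hk⟩ := hg
        refine ⟨((u.1 - b * k : ℤ) : ZMod m), Subtype.ext ?_⟩
        set v : ℤ := (((u.1 - b * k : ℤ) : ZMod m).val : ℤ) with hv
        have hvv : (a + b) ∣ (u.1 - b * k - v) := by
          have h5 : ((u.1 - b * k - v : ℤ) : ZMod m) = 0 := by
            push_cast [hv]
            rw [ZMod.natCast_rightInverse]
            ring
          exact (Int.natAbs_dvd).mp ((ZMod.intCast_zmod_eq_zero_iff_dvd _ _).mp h5)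
        obtain ⟨j, hj⟩ := hvv
        show QuotientAddGroup.mk (v, v) = QuotientAddGroup.mk u
        rw [QuotientAddGroup.eq_iff_sub_mem]
        refine (mem_H_iff a b _).mpr ⟨-j, -(j + k), ?_⟩
        have h6 : ((v, v) - u : ℤ × ℤ) = ((v - u.1, v - u.2) : ℤ × ℤ) := by
          simp [Prod.ext_iff]
        rw [h6, Prod.ext_iff]
        constructor
        · show -j * a + -(j + k) * b = v - u.1
          linear_combination hj
        · show -j * b + -(j + k) * a = v - u.2
          linear_combination hj + hk
    calc Nat.card {g : (ℤ × ℤ) ⧸ AddSubgroup.closure {((a, b) : ℤ × ℤ), (b, a)} |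
            α g = g} = Nat.card (ZMod m) := (Nat.card_eq_of_bijective F hbij).symm
      _ = m := Nat.card_zmod m
end

section
/- For integers a, b with |a| ≠ |b|, let G = Z²/(Z(a,b)+Z(b,a)) and α the switch involution. Then the subgroup (α - id)(G) equals ker(α + id). -/
/-- For integers `a, b` with `|a| ≠ |b|`, `G = ℤ²/(ℤ(a,b) + ℤ(b,a))` and `α` the switch
involution, the image of `α - id` equals the kernel of `α + id`. -/
theorem stmt_14 (a b : ℤ) (h : a ^ 2 ≠ b ^ 2)
    (α : ((ℤ × ℤ) ⧸ AddSubgroup.closure {((a, b) : ℤ × ℤ), (b, a)}) ≃+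
      ((ℤ × ℤ) ⧸ AddSubgroup.closure {((a, b) : ℤ × ℤ), (b, a)}))
    (hswitch : ∀ u : ℤ × ℤ,
      α (QuotientAddGroup.mk u) = QuotientAddGroup.mk (u.2, u.1)) :
    {x : (ℤ × ℤ) ⧸ AddSubgroup.closure {((a, b) : ℤ × ℤ), (b, a)} | ∃ g, α g - g = x} =
      {x : (ℤ × ℤ) ⧸ AddSubgroup.closure {((a, b) : ℤ × ℤ), (b, a)} | α x + x = 0} := by
  have hab : a ≠ b := fun hh => h (by rw [hh])
  ext x
  simp only [Set.mem_setOf_eq]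
  constructor
  · rintro ⟨g, rfl⟩
    obtain ⟨u, rfl⟩ := QuotientAddGroup.mk_surjective g
    rw [map_sub, hswitch, hswitch, Prod.mk.eta]
    abel
  · intro hx
    obtain ⟨u, rfl⟩ := QuotientAddGroup.mk_surjective x
    rw [hswitch] at hx
    have hx' : ((u.2 + u.1, u.1 + u.2) : ℤ × ℤ) ∈
        AddSubgroup.closure {((a, b) : ℤ × ℤ), (b, a)} := by
      rw [← QuotientAddGroup.eq_zero_iff]
      rw [← QuotientAddGroup.mk_add] at hx
      exact hx
    obtain ⟨m, n, hmn⟩ := AddSubgroup.mem_closure_pair.1 hx'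
    have h1 : m * a + n * b = u.2 + u.1 := by
      have := congrArg Prod.fst hmn
      simpa [Prod.ext_iff, smul_eq_mul] using this
    have h2 : m * b + n * a = u.1 + u.2 := by
      have := congrArg Prod.snd hmn
      simpa [Prod.ext_iff, smul_eq_mul] using this
    have hmn' : m = n := by
      have : (m - n) * (a - b) = 0 := by linarith
      rcases mul_eq_zero.1 this with h' | h'
      · linarith
      · exact absurd (by linarith : a = b) hab
    subst hmn'
    refine ⟨QuotientAddGroup.mk (0, u.1 - m * a), ?_⟩
    rw [hswitch, ← QuotientAddGroup.mk_sub, QuotientAddGroup.eq]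
    apply AddSubgroup.mem_closure_pair.2
    refine ⟨m, 0, ?_⟩
    obtain ⟨u1, u2⟩ := u
    simp only [Prod.ext_iff, Prod.fst_add, Prod.snd_add, Prod.fst_neg, Prod.snd_neg, Prod.fst_sub, Prod.snd_sub,
      Prod.smul_fst, Prod.smul_snd, smul_eq_mul, zero_smul, add_zero] at *
    constructor <;> linarith
end

section
/- Let G be an abelian group, α an automorphism with α² = id, w ∈ G, β(u) = α(u) + w. Suppose (α+id)(w) has finite order q₀ in G. Then every orbit of β has cardinality q₀ or 2q₀, and odd orbit cardinalities can only occur if q₀ is odd. -/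
/-- If `(α + id)(w)` has finite order `q₀`, then every orbit of `β` (every minimal
period of a point under `β`) equals `q₀` or `2q₀`, and an odd orbit cardinality can
only occur if `q₀` is odd. -/
theorem stmt_17 {G : Type*} [AddCommGroup G] (α : G ≃+ G) (hα : ∀ g, α (α g) = g)
    (w : G) (β : G → G) (hβ : ∀ u, β u = α u + w)
    (hfin : IsOfFinAddOrder (α w + w)) :
    ∀ u : G,
      (Function.minimalPeriod β u = addOrderOf (α w + w) ∨
        Function.minimalPeriod β u = 2 * addOrderOf (α w + w)) ∧
      (Odd (Function.minimalPeriod β u) → Odd (addOrderOf (α w + w))) := by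
  intro u
  set c : G := α w + w with hc
  set q : ℕ := addOrderOf c with hq
  have hqpos : 0 < q := hfin.addOrderOf_pos
  have hββ : ∀ v : G, β (β v) = v + c := by
    intro v
    rw [hβ, hβ, map_add, hα, hc]
    abel
  have hiter : ∀ (k : ℕ) (v : G), β^[2 * k] v = v + k • c := by
    intro k
    induction k with
    | zero => simp
    | succ k ih =>
      intro v
      have : 2 * (k + 1) = 2 * k + 2 := by ring
      rw [this, Function.iterate_add_apply, ih]
      show β (β v) + k • c = v + (k + 1) • c
      rw [hββ, succ_nsmul]
      abel
  -- β^[2q] u = u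
  have hper : Function.IsPeriodicPt β (2 * q) u := by
    show β^[2 * q] u = u
    rw [hiter, addOrderOf_nsmul_eq_zero, add_zero]
  set n : ℕ := Function.minimalPeriod β u with hn
  have hnpos : 0 < n := hper.minimalPeriod_pos (by omega)
  have hnd : n ∣ 2 * q := hper.minimalPeriod_dvd
  have hnper : β^[n] u = u := Function.isPeriodicPt_minimalPeriod β u
  have hqn : q ∣ n := by
    have h2n : β^[2 * n] u = u := by
      rw [two_mul, Function.iterate_add_apply, hnper, hnper]
    rw [hiter] at h2n
    exact addOrderOf_dvd_of_nsmul_eq_zero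
      (add_left_cancel (a := u) (by rw [add_zero]; exact h2n))
  constructor
  · obtain ⟨m, hm⟩ := hqn
    have hmd : m ∣ 2 := by
      have : q * m ∣ q * 2 := by rwa [hm, mul_comm 2 q] at hnd
      exact (mul_dvd_mul_iff_left (by omega : q ≠ 0)).mp this
    have hm2 : m ≤ 2 := Nat.le_of_dvd two_pos hmd
    interval_cases m
    · omega
    · left; omega
    · right; omega
  · intro hodd
    rcases Nat.even_or_odd q with he | ho
    · exfalso
      have : Even n := (even_iff_two_dvd.mpr ((even_iff_two_dvd.mp he).trans hqn))
      exact (Nat.not_even_iff_odd.mpr hodd) this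
    · exact ho
end

section
/- Let a = b ≠ 0 be integers, G = Z²/Z(a,a), α the switch involution on G, and w = -[(v₁,v₂)] with v₁+v₂ = c. Set q₀ = |a|/gcd(a,c) and c' = c/gcd(a,c). Then there exists an element u ∈ G with β^(q₀)(u) = u for β(u) = α(u) + w and q₀ odd if and only if q₀ is odd and c' is even. -/
private lemma stmt18_iter_formula {G : Type*} [AddCommGroup G] (α : G ≃+ G)
    (hinv : ∀ u, α (α u) = u) (w : G) (β : G → G) (hβ : ∀ u, β u = α u + w) :
    ∀ (k : ℕ) (u : G), β^[2*k+1] u = α u + w + k • (w + α w) := by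
  intro k
  induction k with
  | zero => intro u; simp [hβ]
  | succ k ih =>
    intro u
    have h2 : 2*(k+1)+1 = (2*k+1) + 2 := by ring
    rw [h2, Function.iterate_add_apply]
    have hβ2 : β^[2] u = u + (w + α w) := by
      show β (β u) = _
      rw [hβ, hβ, map_add, hinv]
      abel
    rw [hβ2, ih, map_add, map_add, hinv, succ_nsmul]
    abel

/-- Subcase 1- of the paper: `a = b ≠ 0`, `G = ℤ²/ℤ(a,a)`, `α` the switch involution,
`w = -[(v₁,v₂)]` with `v₁ + v₂ = c`, `β u = α u + w`, `q₀ = |a| / gcd(a,c)` and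
`c' = c / gcd(a,c)`. Then there is a `u` with `β^[q₀] u = u` and `q₀` odd if and only
if `q₀` is odd and `c'` is even. -/
theorem stmt_18 (a c v₁ v₂ : ℤ) (ha : a ≠ 0) (hc : v₁ + v₂ = c)
    (α : ((ℤ × ℤ) ⧸ AddSubgroup.closure {((a, a) : ℤ × ℤ)}) ≃+
      ((ℤ × ℤ) ⧸ AddSubgroup.closure {((a, a) : ℤ × ℤ)}))
    (hswitch : ∀ u : ℤ × ℤ,
      α (QuotientAddGroup.mk u) = QuotientAddGroup.mk (u.2, u.1))
    (w : (ℤ × ℤ) ⧸ AddSubgroup.closure {((a, a) : ℤ × ℤ)})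
    (hw : w = -QuotientAddGroup.mk (v₁, v₂))
    (β : ((ℤ × ℤ) ⧸ AddSubgroup.closure {((a, a) : ℤ × ℤ)}) →
      ((ℤ × ℤ) ⧸ AddSubgroup.closure {((a, a) : ℤ × ℤ)}))
    (hβ : ∀ u, β u = α u + w)
    (q₀ : ℕ) (hq₀ : q₀ = a.natAbs / Int.gcd a c)
    (c' : ℤ) (hc' : c' = c / (Int.gcd a c : ℤ)) :
    ((∃ u, β^[q₀] u = u) ∧ Odd q₀) ↔ (Odd q₀ ∧ 2 ∣ c') := by
  have hinv : ∀ u, α (α u) = u := by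
    intro u
    induction u using QuotientAddGroup.induction_on with
    | H x => rw [hswitch]; rw [hswitch]
  have hformula := stmt18_iter_formula α hinv w β hβ
  have hsmul : ∀ (k : ℕ) (x : ℤ × ℤ),
      (k • (QuotientAddGroup.mk x : (ℤ × ℤ) ⧸ AddSubgroup.closure {((a, a) : ℤ × ℤ)}))
        = QuotientAddGroup.mk (k • x) :=
    fun k x => (map_nsmul (QuotientAddGroup.mk' (AddSubgroup.closure {((a, a) : ℤ × ℤ)})) k x).symm
  have hwα : w + α w =
      (QuotientAddGroup.mk (-c, -c) : (ℤ × ℤ) ⧸ AddSubgroup.closure {((a, a) : ℤ × ℤ)}) := by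
    rw [hw, map_neg, hswitch]
    rw [← QuotientAddGroup.mk_neg, ← QuotientAddGroup.mk_neg, ← QuotientAddGroup.mk_add]
    congr 1
    simp [Prod.ext_iff]
    constructor <;> linarith
  -- gcd facts
  have hg0 : Int.gcd a c ≠ 0 := fun h => ha (Int.gcd_eq_zero_iff.mp h).1
  have hgz : ((Int.gcd a c : ℤ)) ≠ 0 := by exact_mod_cast hg0
  have hdc : ((Int.gcd a c : ℤ)) ∣ c := Int.gcd_dvd_right a c
  have hda : ((Int.gcd a c : ℤ)) ∣ (a.natAbs : ℤ) := by
    exact_mod_cast Int.natCast_dvd_natCast.mpr (Nat.gcd_dvd_left _ _)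
  have h1 : (q₀ : ℤ) * (Int.gcd a c : ℤ) = (a.natAbs : ℤ) := by
    rw [hq₀]; exact_mod_cast Nat.div_mul_cancel (Nat.gcd_dvd_left _ _)
  have h2 : c' * (Int.gcd a c : ℤ) = c := by rw [hc']; exact Int.ediv_mul_cancel hdc
  have hqc : (q₀ : ℤ) * c = (a.natAbs : ℤ) * c' := by rw [← h2, ← h1]; ring
  constructor
  · rintro ⟨⟨u, hu⟩, hodd⟩
    refine ⟨hodd, ?_⟩
    obtain ⟨k, hk⟩ := hodd
    obtain ⟨p, rfl⟩ := QuotientAddGroup.mk_surjective u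
    rw [show q₀ = 2*k+1 by omega, hformula, hswitch, hwα, hsmul, hw] at hu
    rw [← QuotientAddGroup.mk_neg, ← QuotientAddGroup.mk_add, ← QuotientAddGroup.mk_add] at hu
    rw [QuotientAddGroup.eq] at hu
    obtain ⟨n, hn⟩ := AddSubgroup.mem_closure_singleton.mp hu
    have h1 := congrArg Prod.fst hn
    have h2 := congrArg Prod.snd hn
    simp [smul_eq_mul] at h1 h2
    have hq : (q₀ : ℤ) * c = 2 * (n * a) := by
      have hqz : (q₀ : ℤ) = 2 * k + 1 := by exact_mod_cast (by omega : q₀ = 2*k+1)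
      rw [hqz]
      nlinarith [h1, h2, hc]
    rw [hqc] at hq
    rcases Int.natAbs_eq a with h | h
    · refine ⟨n, ?_⟩
      have : a * c' = a * (2 * n) := by rw [← h] at hq; linarith [hq]
      exact mul_left_cancel₀ ha this
    · refine ⟨-n, ?_⟩
      have : a * c' = a * (2 * -n) := by
        have h' : (a.natAbs : ℤ) = -a := by omega
        rw [h'] at hq; linarith [hq]
      exact mul_left_cancel₀ ha this
  · rintro ⟨hodd, e, he⟩
    refine ⟨?_, hodd⟩
    obtain ⟨k, hk⟩ := hodd
    obtain ⟨m, hm⟩ : ∃ m : ℤ, (q₀ : ℤ) * c = 2 * (m * a) := by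
      rcases Int.natAbs_eq a with h | h
      · exact ⟨e, by rw [hqc, he, ← h]; ring⟩
      · refine ⟨-e, ?_⟩
        have h' : (a.natAbs : ℤ) = -a := by omega
        rw [hqc, he, h']; ring
    refine ⟨QuotientAddGroup.mk (0, v₁ + k*c - m*a), ?_⟩
    rw [show q₀ = 2*k+1 by omega, hformula, hswitch, hwα, hsmul, hw]
    rw [← QuotientAddGroup.mk_neg, ← QuotientAddGroup.mk_add, ← QuotientAddGroup.mk_add]
    rw [QuotientAddGroup.eq]
    refine AddSubgroup.mem_closure_singleton.mpr ⟨m, ?_⟩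
    have hqz : (q₀ : ℤ) = 2 * k + 1 := by exact_mod_cast (by omega : q₀ = 2*k+1)
    rw [hqz] at hm
    simp [Prod.ext_iff, smul_eq_mul]
    constructor <;> nlinarith [hm, hc]
end

section
/- Let G be a finite abelian group, α an automorphism with α² = id and (α-id)(G) = ker(α+id), w ∈ G, β(u) = α(u)+w, and q₀ the order of (α+id)(w). If q₀ is odd, then the number of orbits of β of odd cardinality equals #ker(α - id) / q₀, and the number of orbits of even cardinality equals #(G \ F) / (2q₀) where F is the fixed point set of β^(q₀) (which has cardinality #ker(α-id)). -/
open Function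

private lemma aux_count {A B : Type*} [Finite A] [Finite B] (f : A → B) (n : ℕ)
    (h : ∀ b, Nat.card {a // f a = b} = n) :
    Nat.card A = Nat.card B * n := by
  classical
  cases nonempty_fintype A
  cases nonempty_fintype B
  calc Nat.card A = Fintype.card A := Nat.card_eq_fintype_card
    _ = Fintype.card (Σ b, {a // f a = b}) :=
        (Fintype.card_congr (Equiv.sigmaFiberEquiv f)).symm
    _ = ∑ b, Fintype.card {a // f a = b} := Fintype.card_sigma
    _ = ∑ _b : B, n := by
        apply Finset.sum_congr rfl
        intro b _
        rw [← Nat.card_eq_fintype_card, h]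
    _ = Fintype.card B * n := by
        rw [Finset.sum_const, Finset.card_univ, smul_eq_mul]
    _ = Nat.card B * n := by rw [Nat.card_eq_fintype_card]

private lemma aux_mt {G : Type*} [AddCommGroup G] (t : G) (q₀ k m : ℕ)
    (hk : q₀ = 2 * k + 1)
    (htzero : q₀ • t = 0)
    (h2 : (2*m+1) • t = 0) : m • t = k • t := by
  have e2m : (2*m) • t = -t := by
    have h3 : (2*m) • t + t = 0 := by rw [← succ_nsmul]; exact h2
    exact eq_neg_of_add_eq_zero_left h3
  have e2k : (2*k) • t = -t := by
    have h3 : (2*k) • t + t = 0 := by rw [← succ_nsmul, ← hk]; exact htzero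
    exact eq_neg_of_add_eq_zero_left h3
  set d : G := m • t - k • t with hd
  have hd2 : (2:ℕ) • d = 0 := by
    rw [hd, smul_sub, ← mul_smul, ← mul_smul, e2m, e2k, sub_self]
  have hdq : q₀ • d = 0 := by
    rw [hd, smul_sub, smul_comm q₀ m, smul_comm q₀ k, htzero, smul_zero, smul_zero, sub_self]
  have hdvd2 : addOrderOf d ∣ 2 := addOrderOf_dvd_of_nsmul_eq_zero hd2
  have hdvdq : addOrderOf d ∣ q₀ := addOrderOf_dvd_of_nsmul_eq_zero hdq
  have hcop : Nat.Coprime 2 q₀ := Nat.coprime_two_left.mpr ⟨k, by omega⟩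
  have h1 : addOrderOf d = 1 := Nat.eq_one_of_dvd_coprimes hcop hdvd2 hdvdq
  have : d = 0 := AddMonoid.addOrderOf_eq_one_iff.mp h1
  rw [hd] at this
  exact sub_eq_zero.mp this

/-- Orbit counting of Theorem 3.1: `G` a finite abelian group, `α` an automorphism with
`α² = id` and `(α - id)(G) = ker (α + id)`, `w ∈ G`, `β u = α u + w`, and
`q₀ = addOrderOf (α w + w)` odd. Then the number of orbits of `β` of odd cardinality
is `#ker(α - id) / q₀`, the number of orbits of even cardinality is
`#(G \ F) / (2q₀)` where `F` is the fixed point set of `β^[q₀]`, and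
`#F = #ker(α - id)`. -/
theorem stmt_19 {G : Type*} [AddCommGroup G] [Finite G] (α : G ≃+ G)
    (hα : ∀ g, α (α g) = g)
    (hker : ∀ x : G, (∃ g : G, α g - g = x) ↔ α x + x = 0)
    (w : G) (β : G → G) (hβ : ∀ u, β u = α u + w)
    (q₀ : ℕ) (hq₀ : q₀ = addOrderOf (α w + w)) (hodd : Odd q₀)
    (orb : G → Set G) (horb : ∀ u, orb u = {v | ∃ n : ℕ, β^[n] u = v}) :
    Nat.card {s : Set G // (∃ u, s = orb u) ∧ Odd (Nat.card s)} =
        Nat.card {g : G | α g = g} / q₀ ∧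
      Nat.card {s : Set G // (∃ u, s = orb u) ∧ Even (Nat.card s)} =
        (Nat.card G - Nat.card {u : G | β^[q₀] u = u}) / (2 * q₀) ∧
      Nat.card {u : G | β^[q₀] u = u} = Nat.card {g : G | α g = g} := by
  classical
  obtain ⟨k, hk⟩ := hodd
  set t : G := α w + w with ht
  have hq0pos : 0 < q₀ := by omega
  have htzero : q₀ • t = 0 := by rw [hq₀]; exact addOrderOf_nsmul_eq_zero _
  have htdvd : ∀ n : ℕ, n • t = 0 → q₀ ∣ n := by
    intro n hn; rw [hq₀]; exact addOrderOf_dvd_of_nsmul_eq_zero hn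
  have hαt : α t = t := by rw [ht, map_add, hα, add_comm]
  have hβ2 : ∀ u, β (β u) = u + t := by
    intro u; rw [hβ, hβ, map_add, hα, ht]; abel
  have hβ2n : ∀ u, β^[2] u = u + t := by
    intro u; simpa [Function.iterate_succ_apply] using hβ2 u
  have hβeven : ∀ m u, β^[2*m] u = u + m • t := by
    intro m
    induction m with
    | zero => simp
    | succ m ih =>
      intro u
      have h2 : 2*(m+1) = 2*m + 2 := by ring
      rw [h2, Function.iterate_add_apply, hβ2n, ih, succ_nsmul]
      abel
  have hβodd : ∀ m u, β^[2*m+1] u = α u + w + m • t := by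
    intro m u
    rw [Function.iterate_succ_apply, hβeven, hβ]
  have hβinj : Function.Injective β := by
    intro a b h
    rw [hβ, hβ] at h
    exact α.injective (add_right_cancel h)
  -- characterization of fixed points of β^[q₀]
  have hF : ∀ u, β^[q₀] u = u ↔ α u + w + k • t = u := by
    intro u; rw [hk, hβodd]
  -- odd period ⟹ q₀ divides it and u is fixed by β^[q₀]
  have hP3 : ∀ m u, β^[2*m+1] u = u → q₀ ∣ (2*m+1) ∧ β^[q₀] u = u := by
    intro m u h
    have h1 : α u + w + m • t = u := by rw [← hβodd]; exact h
    have e2 : u + α w + m • t = α u := by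
      have := congrArg (⇑α) h1
      simpa [map_add, hα, hαt] using this
    have h2 : (2*m+1) • t = 0 := by
      have h3 : u + ((2*m+1) • t) = u := by
        calc u + ((2*m+1) • t) = (u + α w + m • t) + w + m • t := by
              rw [ht]
              have h4 : (2*m+1) • (α w + w) = (2*m) • (α w + w) + (α w + w) := succ_nsmul _ _
              rw [h4, two_mul, add_nsmul]
              abel
          _ = α u + w + m • t := by rw [e2]
          _ = u := h1
      rwa [add_eq_left] at h3
    refine ⟨htdvd _ h2, ?_⟩
    have hmk : m • t = k • t := aux_mt t q₀ k m hk htzero h2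
    rw [hF, ← hmk]
    exact h1
  -- F is nonempty
  obtain ⟨u₀, hu₀⟩ : ∃ u₀ : G, α u₀ - u₀ = -(w + k • t) := by
    rw [hker]
    have : α (w + k • t) + (w + k • t) = 0 := by
      rw [map_add, map_nsmul, hαt]
      have h4 : α w + k • t + (w + k • t) = q₀ • t := by
        rw [hk, succ_nsmul, two_mul, add_nsmul, ht]
        abel
      rw [h4, htzero]
    rw [map_neg, ← neg_add, this, neg_zero]
  have hu₀F : β^[q₀] u₀ = u₀ := by
    rw [hF]
    have : α u₀ + w + k • t = (α u₀ - u₀) + (w + k • t) + u₀ := by abel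
    rw [this, hu₀]
    abel
  -- fixed set of β^[q₀] vs fixed set of α
  have hFchar : ∀ u, β^[q₀] u = u ↔ α (u - u₀) = u - u₀ := by
    intro u
    have h0 : α u₀ + w + k • t = u₀ := (hF u₀).mp hu₀F
    rw [hF, map_sub]
    constructor
    · intro h
      have : α u - α u₀ = (α u + w + k • t) - (α u₀ + w + k • t) := by abel
      rw [this, h, h0]
    · intro h
      have h5 : α u + w + k • t = (α u - α u₀) + (α u₀ + w + k • t) := by abel
      rw [h5, h, h0]
      abel
  have hcard3 : Nat.card {u : G | β^[q₀] u = u} = Nat.card {g : G | α g = g} := by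
    apply Nat.card_congr
    refine ⟨fun u => ⟨u.1 - u₀, (hFchar u.1).mp u.2⟩,
            fun g => ⟨g.1 + u₀, (hFchar _).mpr (by simp only [add_sub_cancel_right]; exact g.2)⟩, ?_, ?_⟩
    · intro u; ext; simp
    · intro g; ext; simp
  -- minimal period facts
  have hper2q : ∀ u, Function.IsPeriodicPt β (2*q₀) u := by
    intro u
    show β^[2*q₀] u = u
    rw [hβeven, htzero, add_zero]
  have hmp_pos : ∀ u, 0 < Function.minimalPeriod β u := by
    intro u
    exact (hper2q u).minimalPeriod_pos (by positivity)
  have hmpF : ∀ u, β^[q₀] u = u → Function.minimalPeriod β u = q₀ := by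
    intro u hu
    have hdvd : Function.minimalPeriod β u ∣ q₀ :=
      Function.IsPeriodicPt.minimalPeriod_dvd hu
    have hmodd : Odd (Function.minimalPeriod β u) := by
      rcases Nat.even_or_odd (Function.minimalPeriod β u) with he | ho
      · exfalso
        have h2 : 2 ∣ q₀ := dvd_trans he.two_dvd hdvd
        omega
      · exact ho
    obtain ⟨m, hm⟩ := hmodd
    have hper : β^[2*m+1] u = u := by
      rw [← hm]; exact Function.iterate_minimalPeriod
    have := (hP3 m u hper).1
    exact Nat.dvd_antisymm hdvd (hm ▸ this)
  have hmpNF : ∀ u, ¬ (β^[q₀] u = u) → Function.minimalPeriod β u = 2*q₀ := by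
    intro u hu
    have hdvd : Function.minimalPeriod β u ∣ 2*q₀ :=
      Function.IsPeriodicPt.minimalPeriod_dvd (hper2q u)
    rcases Nat.even_or_odd (Function.minimalPeriod β u) with he | ho
    · obtain ⟨m, hm⟩ := he
      have hm' : Function.minimalPeriod β u = 2*m := by omega
      have hper : β^[2*m] u = u := by
        rw [← hm']; exact Function.iterate_minimalPeriod
      rw [hβeven] at hper
      have hmt : m • t = 0 := by rwa [add_eq_left] at hper
      obtain ⟨j, hj⟩ := htdvd m hmt
      have hmpos : 0 < m := by
        have := hmp_pos u; omega
      have hjpos : 0 < j := by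
        rcases Nat.eq_zero_or_pos j with h | h
        · rw [h, mul_zero] at hj; omega
        · exact h
      have : 2*q₀ ≤ Function.minimalPeriod β u := by
        rw [hm']
        calc 2*q₀ ≤ 2*(q₀*j) := by nlinarith
          _ = 2*m := by rw [hj]
      exact Nat.dvd_antisymm hdvd (by
        have h2m : (2*q₀) ∣ 2*m := by
          rw [hj]; exact ⟨j, by ring⟩
        rwa [← hm'] at h2m)
    · exfalso
      obtain ⟨m, hm⟩ := ho
      have hper : β^[2*m+1] u = u := by
        rw [← hm]; exact Function.iterate_minimalPeriod
      exact hu (hP3 m u hper).2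
  -- orbit facts
  have horbself : ∀ u, u ∈ orb u := by
    intro u; rw [horb]; exact ⟨0, rfl⟩
  have horbit : ∀ u n, β^[n] u ∈ orb u := by
    intro u n; rw [horb]; exact ⟨n, rfl⟩
  have hback : ∀ u n, u ∈ orb (β^[n] u) := by
    intro u n
    rw [horb]
    refine ⟨n*(2*q₀) - n, ?_⟩
    rw [← Function.iterate_add_apply]
    have hn : n*(2*q₀) - n + n = n*(2*q₀) := by
      have : n ≤ n*(2*q₀) := by nlinarith
      omega
    rw [hn]
    exact (hper2q u).const_mul n
  have horbsub : ∀ u v, v ∈ orb u → orb v ⊆ orb u := by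
    intro u v hv x hx
    rw [horb] at hv hx ⊢
    obtain ⟨n, rfl⟩ := hv
    obtain ⟨m, rfl⟩ := hx
    exact ⟨m + n, by rw [Function.iterate_add_apply]⟩
  have horbeq : ∀ u v, v ∈ orb u → orb v = orb u := by
    intro u v hv
    apply subset_antisymm (horbsub u v hv)
    apply horbsub
    rw [horb] at hv
    obtain ⟨n, rfl⟩ := hv
    exact hback u n
  -- orbit invariance of fixed point set
  have hFinvorb : ∀ u v, β^[q₀] u = u → v ∈ orb u → β^[q₀] v = v := by
    intro u v hu hv
    rw [horb] at hv
    obtain ⟨n, rfl⟩ := hv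
    rw [← Function.iterate_add_apply, add_comm, Function.iterate_add_apply, hu]
  -- orbit cardinality
  have horbcard : ∀ u, Nat.card (orb u) = Function.minimalPeriod β u := by
    intro u
    set p := Function.minimalPeriod β u with hp
    have hppos : 0 < p := hmp_pos u
    have heq : orb u = Set.range (fun i : Fin p => β^[i.1] u) := by
      rw [horb]
      ext v
      constructor
      · rintro ⟨n, rfl⟩
        exact ⟨⟨n % p, Nat.mod_lt _ hppos⟩, Function.iterate_mod_minimalPeriod_eq⟩
      · rintro ⟨i, rfl⟩
        exact ⟨i.1, rfl⟩
    have hpu : β^[p] u = u := Function.iterate_minimalPeriod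
    have key : ∀ a b : Fin p, a.1 ≤ b.1 → β^[a.1] u = β^[b.1] u → a = b := by
      intro a b hle hab
      have ha : a.1 < p := a.2
      have hb : b.1 < p := b.2
      have h2 : β^[(p - a.1) + b.1] u = β^[(p - a.1) + a.1] u := by
        rw [Function.iterate_add_apply, Function.iterate_add_apply, hab]
      have h3 : (p - a.1) + a.1 = p := by omega
      have h4 : (p - a.1) + b.1 = (b.1 - a.1) + p := by omega
      rw [h3, h4, Function.iterate_add_apply, hpu] at h2
      have h5 : p ∣ b.1 - a.1 := Function.IsPeriodicPt.minimalPeriod_dvd h2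
      have h7 : b.1 - a.1 = 0 := Nat.eq_zero_of_dvd_of_lt h5 (by omega)
      exact Fin.ext (by omega)
    have hinj : Function.Injective (fun i : Fin p => β^[i.1] u) := by
      intro a b hab
      simp only at hab
      rcases le_total a.1 b.1 with h | h
      · exact key a b h hab
      · exact (key b a h hab.symm).symm
    rw [heq, Nat.card_range_of_injective hinj, Nat.card_eq_fintype_card, Fintype.card_fin]
  -- odd orbits correspond to the fixed-point set
  have hOddKey :
      Nat.card {u : G | β^[q₀] u = u}
        = Nat.card {s : Set G // (∃ u, s = orb u) ∧ Odd (Nat.card s)} * q₀ := by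
    have hmem : ∀ a : {u : G | β^[q₀] u = u}, Odd (Nat.card (orb a.1)) := by
      intro a
      rw [horbcard, hmpF a.1 a.2]
      exact ⟨k, hk⟩
    let f : {u : G | β^[q₀] u = u} → {s : Set G // (∃ u, s = orb u) ∧ Odd (Nat.card s)} :=
      fun a => ⟨orb a.1, ⟨a.1, rfl⟩, hmem a⟩
    apply aux_count f q₀
    intro s
    obtain ⟨u, hu⟩ := s.2.1
    have huF : β^[q₀] u = u := by
      by_contra h
      have h1 : Nat.card s.1 = 2*q₀ := by rw [hu, horbcard, hmpNF u h]
      have h2 := s.2.2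
      rw [h1] at h2
      exact (Nat.not_odd_iff_even.mpr ⟨q₀, by ring⟩) h2
    have horbF : ∀ v, v ∈ orb u → β^[q₀] v = v := fun v hv => hFinvorb u v huF hv
    have hcfib : Nat.card {a : {u : G | β^[q₀] u = u} // f a = s} = Nat.card (orb u) := by
      apply Nat.card_congr
      refine ⟨fun a => ⟨a.1.1, ?_⟩, fun v => ⟨⟨v.1, horbF v.1 v.2⟩, ?_⟩, ?_, ?_⟩
      · have h3 : orb a.1.1 = orb u := by
          have h4 := congrArg Subtype.val a.2
          rw [hu] at h4
          exact h4
        rw [← h3]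
        exact horbself a.1.1
      · apply Subtype.ext
        show orb v.1 = s.1
        rw [hu]
        exact horbeq u v.1 v.2
      · intro a; ext; rfl
      · intro v; ext; rfl
    rw [hcfib, horbcard, hmpF u huF]
  -- even orbits correspond to the complement
  have hEvenKey :
      Nat.card {u : G | ¬ β^[q₀] u = u}
        = Nat.card {s : Set G // (∃ u, s = orb u) ∧ Even (Nat.card s)} * (2*q₀) := by
    have hNFinv : ∀ u v, ¬ β^[q₀] u = u → v ∈ orb u → ¬ β^[q₀] v = v := by
      intro u v hu hv hvF
      apply hu
      apply hFinvorb v u hvF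
      rw [horbeq u v hv]
      exact horbself u
    have hmem : ∀ a : {u : G | ¬ β^[q₀] u = u}, Even (Nat.card (orb a.1)) := by
      intro a
      rw [horbcard, hmpNF a.1 a.2]
      exact ⟨q₀, by ring⟩
    let f : {u : G | ¬ β^[q₀] u = u} → {s : Set G // (∃ u, s = orb u) ∧ Even (Nat.card s)} :=
      fun a => ⟨orb a.1, ⟨a.1, rfl⟩, hmem a⟩
    apply aux_count f (2*q₀)
    intro s
    obtain ⟨u, hu⟩ := s.2.1
    have huF : ¬ β^[q₀] u = u := by
      intro h
      have h1 : Nat.card s.1 = q₀ := by rw [hu, horbcard, hmpF u h]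
      have h2 := s.2.2
      rw [h1] at h2
      exact (Nat.not_odd_iff_even.mpr h2) ⟨k, hk⟩
    have horbF : ∀ v, v ∈ orb u → ¬ β^[q₀] v = v := fun v hv => hNFinv u v huF hv
    have hcfib : Nat.card {a : {u : G | ¬ β^[q₀] u = u} // f a = s} = Nat.card (orb u) := by
      apply Nat.card_congr
      refine ⟨fun a => ⟨a.1.1, ?_⟩, fun v => ⟨⟨v.1, horbF v.1 v.2⟩, ?_⟩, ?_, ?_⟩
      · have h3 : orb a.1.1 = orb u := by
          have h4 := congrArg Subtype.val a.2
          rw [hu] at h4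
          exact h4
        rw [← h3]
        exact horbself a.1.1
      · apply Subtype.ext
        show orb v.1 = s.1
        rw [hu]
        exact horbeq u v.1 v.2
      · intro a; ext; rfl
      · intro v; ext; rfl
    rw [hcfib, horbcard, hmpNF u huF]
  -- cardinality of the complement
  have hcompl : Nat.card {u : G | ¬ β^[q₀] u = u}
      = Nat.card G - Nat.card {u : G | β^[q₀] u = u} := by
    have h1 : ({u : G | ¬ β^[q₀] u = u} : Set G) = {u : G | β^[q₀] u = u}ᶜ := by
      ext x; simp [Set.mem_compl_iff]
    rw [Nat.card_coe_set_eq, Nat.card_coe_set_eq, h1]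
    have h2 := Set.ncard_add_ncard_compl ({u : G | β^[q₀] u = u} : Set G)
    omega
  refine ⟨?_, ?_, hcard3⟩
  · rw [← hcard3, hOddKey, Nat.mul_div_cancel _ hq0pos]
  · rw [← hcompl, hEvenKey, Nat.mul_div_cancel _ (by omega : 0 < 2*q₀)]
end
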